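/- Let k₀ be a positive integer, U(y) = sin(k₀ y), and let f₀, g₀ be C¹ periodic functions on 𝕋 = [−π,π]. Define ρ(t,x,y) = f₀(y) sin(x + t sin(k₀ y)) + g₀(y) cos(x + t sin(k₀ y)) on 𝕋² (the solution of ∂_t ρ + sin(k₀ y) ∂_x ρ = 0 with initial data f₀(y) sin x + g₀(y) cos x). Then for all t ≥ 0, ‖ρ(t,·)‖²_{H¹(𝕋²)} ≤ 2 ‖ρ(0,·)‖²_{H¹(𝕋²)} + 10π k₀² t² ‖ρ(0,·)‖²_{L²(𝕋²)}. -/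

import Mathlib

open Real MeasureTheory intervalIntegral

noncomputable section

/-- Squared `H¹` norm on the torus `𝕋² = [−π,π]²`:
`‖ρ‖²_{H¹} = ∫_{𝕋²} (ρ² + (∂_x ρ)² + (∂_y ρ)²) dx dy`. -/
def h1NormSq (ρ : ℝ → ℝ → ℝ) : ℝ :=
  ∫ x in (-π)..π, ∫ y in (-π)..π,
    ((ρ x y) ^ 2 + (deriv (fun x' => ρ x' y) x) ^ 2 + (deriv (fun y' => ρ x y') y) ^ 2)

/-- Squared `L²` norm on the torus `𝕋² = [−π,π]²`. -/
def l2NormSq (ρ : ℝ → ℝ → ℝ) : ℝ :=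
  ∫ x in (-π)..π, ∫ y in (-π)..π, (ρ x y) ^ 2

/-- Solution of `∂_t ρ + sin(k₀ y) ∂_x ρ = 0` with data `f₀(y) sin x + g₀(y) cos x`. -/
def shearSol (k₀ : ℕ) (f₀ g₀ : ℝ → ℝ) (t x y : ℝ) : ℝ :=
  f₀ y * Real.sin (x + t * Real.sin ((k₀ : ℝ) * y)) +
    g₀ y * Real.cos (x + t * Real.sin ((k₀ : ℝ) * y))

lemma trig_int (a b c : ℝ) :
    ∫ x in (-π)..π, (a * Real.sin (x + c) + b * Real.cos (x + c)) ^ 2 = π * (a ^ 2 + b ^ 2) := by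
  have per : Function.Periodic (fun x => (a * Real.sin x + b * Real.cos x) ^ 2) (2 * π) := by
    intro x; simp [Real.sin_add_two_pi, Real.cos_add_two_pi]
  have h1 : (∫ x in (-π)..π, (a * Real.sin (x + c) + b * Real.cos (x + c)) ^ 2)
      = ∫ x in (-π + c)..(π + c), (a * Real.sin x + b * Real.cos x) ^ 2 :=
    intervalIntegral.integral_comp_add_right (fun x => (a * Real.sin x + b * Real.cos x) ^ 2) c
  have h2 : (∫ x in (-π + c)..(π + c), (a * Real.sin x + b * Real.cos x) ^ 2)
      = ∫ x in (-π)..π, (a * Real.sin x + b * Real.cos x) ^ 2 := by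
    have := per.intervalIntegral_add_eq (-π + c) (-π)
    rw [show -π + c + 2 * π = π + c by ring, show -π + 2 * π = π by ring] at this
    exact this
  rw [h1, h2]
  have h3 : ∀ x, (a * Real.sin x + b * Real.cos x) ^ 2
      = a ^ 2 * Real.sin x ^ 2 + ((2 * a * b) * (Real.sin x * Real.cos x)
        + b ^ 2 * Real.cos x ^ 2) := by intro x; ring
  rw [intervalIntegral.integral_congr (fun x _ => h3 x)]
  have i1 : IntervalIntegrable (fun x => a ^ 2 * Real.sin x ^ 2) volume (-π) π := by
    apply Continuous.intervalIntegrable; continuity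
  have i2 : IntervalIntegrable (fun x => (2 * a * b) * (Real.sin x * Real.cos x)) volume (-π) π := by
    apply Continuous.intervalIntegrable; continuity
  have i3 : IntervalIntegrable (fun x => b ^ 2 * Real.cos x ^ 2) volume (-π) π := by
    apply Continuous.intervalIntegrable; continuity
  rw [intervalIntegral.integral_add i1 (i2.add i3), intervalIntegral.integral_add i2 i3,
    intervalIntegral.integral_const_mul, intervalIntegral.integral_const_mul,
    intervalIntegral.integral_const_mul, integral_sin_sq, integral_cos_sq,
    integral_sin_mul_cos₁]
  simp [Real.sin_pi, Real.cos_pi]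
  ring

lemma swap_int (F : ℝ → ℝ → ℝ) (hF : Continuous (Function.uncurry F)) :
    ∫ x in (-π)..π, ∫ y in (-π)..π, F x y = ∫ y in (-π)..π, ∫ x in (-π)..π, F x y := by
  have hle : (-π) ≤ π := by linarith [Real.pi_pos]
  simp_rw [intervalIntegral.integral_of_le hle]
  apply MeasureTheory.integral_integral_swap
  rw [Measure.prod_restrict, ← Measure.volume_eq_prod]
  apply IntegrableOn.mono_set (t := Set.Icc (-π) π ×ˢ Set.Icc (-π) π)
  · exact hF.continuousOn.integrableOn_compact (isCompact_Icc.prod isCompact_Icc)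
  · exact Set.prod_mono Set.Ioc_subset_Icc_self Set.Ioc_subset_Icc_self

lemma deriv_x (k₀ : ℕ) (f₀ g₀ : ℝ → ℝ) (t x y : ℝ) :
    deriv (fun x' => shearSol k₀ f₀ g₀ t x' y) x =
      f₀ y * Real.cos (x + t * Real.sin ((k₀ : ℝ) * y))
        - g₀ y * Real.sin (x + t * Real.sin ((k₀ : ℝ) * y)) := by
  have h : HasDerivAt (fun x' => x' + t * Real.sin ((k₀ : ℝ) * y)) 1 x :=
    (hasDerivAt_id x).add_const _
  have H : HasDerivAt (fun x' => shearSol k₀ f₀ g₀ t x' y)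
      (f₀ y * (Real.cos (x + t * Real.sin ((k₀ : ℝ) * y)) * 1)
        + g₀ y * (-Real.sin (x + t * Real.sin ((k₀ : ℝ) * y)) * 1)) x :=
    ((h.sin).const_mul (f₀ y)).add ((h.cos).const_mul (g₀ y))
  rw [H.deriv]; ring

lemma deriv_y (k₀ : ℕ) (f₀ g₀ : ℝ → ℝ) (hf₀ : ContDiff ℝ 1 f₀) (hg₀ : ContDiff ℝ 1 g₀)
    (t x y : ℝ) :
    deriv (fun y' => shearSol k₀ f₀ g₀ t x y') y =
      (deriv f₀ y - t * (k₀ : ℝ) * Real.cos ((k₀ : ℝ) * y) * g₀ y)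
          * Real.sin (x + t * Real.sin ((k₀ : ℝ) * y))
        + (deriv g₀ y + t * (k₀ : ℝ) * Real.cos ((k₀ : ℝ) * y) * f₀ y)
          * Real.cos (x + t * Real.sin ((k₀ : ℝ) * y)) := by
  have hk : HasDerivAt (fun y' => (k₀ : ℝ) * y') ((k₀ : ℝ)) y := by
    simpa using (hasDerivAt_id y).const_mul ((k₀ : ℝ))
  have hφ : HasDerivAt (fun y' => x + t * Real.sin ((k₀ : ℝ) * y'))
      (t * (Real.cos ((k₀ : ℝ) * y) * (k₀ : ℝ))) y :=
    ((hk.sin).const_mul t).const_add x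
  have hf' : HasDerivAt f₀ (deriv f₀ y) y :=
    ((hf₀.differentiable one_ne_zero) y).hasDerivAt
  have hg' : HasDerivAt g₀ (deriv g₀ y) y :=
    ((hg₀.differentiable one_ne_zero) y).hasDerivAt
  have H : HasDerivAt (fun y' => shearSol k₀ f₀ g₀ t x y')
      ((deriv f₀ y * Real.sin (x + t * Real.sin ((k₀ : ℝ) * y))
          + f₀ y * (Real.cos (x + t * Real.sin ((k₀ : ℝ) * y))
            * (t * (Real.cos ((k₀ : ℝ) * y) * (k₀ : ℝ)))))
        + (deriv g₀ y * Real.cos (x + t * Real.sin ((k₀ : ℝ) * y))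
          + g₀ y * (-Real.sin (x + t * Real.sin ((k₀ : ℝ) * y))
            * (t * (Real.cos ((k₀ : ℝ) * y) * (k₀ : ℝ)))))) y :=
    (hf'.mul (hφ.sin)).add (hg'.mul (hφ.cos))
  rw [H.deriv]; ring

lemma h1_formula (k₀ : ℕ) (f₀ g₀ : ℝ → ℝ) (hf₀ : ContDiff ℝ 1 f₀) (hg₀ : ContDiff ℝ 1 g₀)
    (t : ℝ) :
    h1NormSq (shearSol k₀ f₀ g₀ t) = ∫ y in (-π)..π,
      (2 * π * (f₀ y ^ 2 + g₀ y ^ 2)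
        + π * ((deriv f₀ y - t * (k₀ : ℝ) * Real.cos ((k₀ : ℝ) * y) * g₀ y) ^ 2
          + (deriv g₀ y + t * (k₀ : ℝ) * Real.cos ((k₀ : ℝ) * y) * f₀ y) ^ 2)) := by
  have hfc : Continuous f₀ := hf₀.continuous
  have hgc : Continuous g₀ := hg₀.continuous
  have hfc' : Continuous (deriv f₀) := hf₀.continuous_deriv le_rfl
  have hgc' : Continuous (deriv g₀) := hg₀.continuous_deriv le_rfl
  calc
    h1NormSq (shearSol k₀ f₀ g₀ t)
        = ∫ x in (-π)..π, ∫ y in (-π)..π,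
            ((f₀ y * Real.sin (x + t * Real.sin ((k₀ : ℝ) * y))
                + g₀ y * Real.cos (x + t * Real.sin ((k₀ : ℝ) * y))) ^ 2
              + (f₀ y * Real.cos (x + t * Real.sin ((k₀ : ℝ) * y))
                - g₀ y * Real.sin (x + t * Real.sin ((k₀ : ℝ) * y))) ^ 2
              + ((deriv f₀ y - t * (k₀ : ℝ) * Real.cos ((k₀ : ℝ) * y) * g₀ y)
                  * Real.sin (x + t * Real.sin ((k₀ : ℝ) * y))
                + (deriv g₀ y + t * (k₀ : ℝ) * Real.cos ((k₀ : ℝ) * y) * f₀ y)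
                  * Real.cos (x + t * Real.sin ((k₀ : ℝ) * y))) ^ 2) := by
        simp only [h1NormSq]
        simp_rw [deriv_x, deriv_y k₀ f₀ g₀ hf₀ hg₀, shearSol]
    _ = ∫ y in (-π)..π, ∫ x in (-π)..π,
            ((f₀ y * Real.sin (x + t * Real.sin ((k₀ : ℝ) * y))
                + g₀ y * Real.cos (x + t * Real.sin ((k₀ : ℝ) * y))) ^ 2
              + (f₀ y * Real.cos (x + t * Real.sin ((k₀ : ℝ) * y))
                - g₀ y * Real.sin (x + t * Real.sin ((k₀ : ℝ) * y))) ^ 2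
              + ((deriv f₀ y - t * (k₀ : ℝ) * Real.cos ((k₀ : ℝ) * y) * g₀ y)
                  * Real.sin (x + t * Real.sin ((k₀ : ℝ) * y))
                + (deriv g₀ y + t * (k₀ : ℝ) * Real.cos ((k₀ : ℝ) * y) * f₀ y)
                  * Real.cos (x + t * Real.sin ((k₀ : ℝ) * y))) ^ 2) := by
        apply swap_int
        apply Continuous.add
        apply Continuous.add
        all_goals fun_prop
    _ = ∫ y in (-π)..π,
          (2 * π * (f₀ y ^ 2 + g₀ y ^ 2)
            + π * ((deriv f₀ y - t * (k₀ : ℝ) * Real.cos ((k₀ : ℝ) * y) * g₀ y) ^ 2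
              + (deriv g₀ y + t * (k₀ : ℝ) * Real.cos ((k₀ : ℝ) * y) * f₀ y) ^ 2)) := by
        apply intervalIntegral.integral_congr
        intro y _
        dsimp only
        have hpt : ∀ x : ℝ,
            ((f₀ y * Real.sin (x + t * Real.sin ((k₀ : ℝ) * y))
                + g₀ y * Real.cos (x + t * Real.sin ((k₀ : ℝ) * y))) ^ 2
              + (f₀ y * Real.cos (x + t * Real.sin ((k₀ : ℝ) * y))
                - g₀ y * Real.sin (x + t * Real.sin ((k₀ : ℝ) * y))) ^ 2
              + ((deriv f₀ y - t * (k₀ : ℝ) * Real.cos ((k₀ : ℝ) * y) * g₀ y)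
                  * Real.sin (x + t * Real.sin ((k₀ : ℝ) * y))
                + (deriv g₀ y + t * (k₀ : ℝ) * Real.cos ((k₀ : ℝ) * y) * f₀ y)
                  * Real.cos (x + t * Real.sin ((k₀ : ℝ) * y))) ^ 2)
            = (f₀ y ^ 2 + g₀ y ^ 2)
              + ((deriv f₀ y - t * (k₀ : ℝ) * Real.cos ((k₀ : ℝ) * y) * g₀ y)
                  * Real.sin (x + t * Real.sin ((k₀ : ℝ) * y))
                + (deriv g₀ y + t * (k₀ : ℝ) * Real.cos ((k₀ : ℝ) * y) * f₀ y)
                  * Real.cos (x + t * Real.sin ((k₀ : ℝ) * y))) ^ 2 := by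
          intro x
          have hs := Real.sin_sq_add_cos_sq (x + t * Real.sin ((k₀ : ℝ) * y))
          linear_combination (f₀ y ^ 2 + g₀ y ^ 2) * hs
        rw [intervalIntegral.integral_congr (fun x _ => hpt x)]
        have iconst : IntervalIntegrable (fun _ : ℝ => f₀ y ^ 2 + g₀ y ^ 2) volume (-π) π :=
          intervalIntegrable_const
        have itrig : IntervalIntegrable (fun x =>
            ((deriv f₀ y - t * (k₀ : ℝ) * Real.cos ((k₀ : ℝ) * y) * g₀ y)
                * Real.sin (x + t * Real.sin ((k₀ : ℝ) * y))
              + (deriv g₀ y + t * (k₀ : ℝ) * Real.cos ((k₀ : ℝ) * y) * f₀ y)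
                * Real.cos (x + t * Real.sin ((k₀ : ℝ) * y))) ^ 2) volume (-π) π := by
          apply Continuous.intervalIntegrable; fun_prop
        rw [intervalIntegral.integral_add iconst itrig, intervalIntegral.integral_const,
          trig_int]
        rw [smul_eq_mul]
        ring

lemma l2_formula (k₀ : ℕ) (f₀ g₀ : ℝ → ℝ) (hf₀ : ContDiff ℝ 1 f₀) (hg₀ : ContDiff ℝ 1 g₀) :
    l2NormSq (shearSol k₀ f₀ g₀ 0) = ∫ y in (-π)..π, π * (f₀ y ^ 2 + g₀ y ^ 2) := by
  have hfc : Continuous f₀ := hf₀.continuous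
  have hgc : Continuous g₀ := hg₀.continuous
  calc
    l2NormSq (shearSol k₀ f₀ g₀ 0)
        = ∫ x in (-π)..π, ∫ y in (-π)..π,
            (f₀ y * Real.sin (x + 0 * Real.sin ((k₀ : ℝ) * y))
              + g₀ y * Real.cos (x + 0 * Real.sin ((k₀ : ℝ) * y))) ^ 2 := by
        simp only [l2NormSq, shearSol]
    _ = ∫ y in (-π)..π, ∫ x in (-π)..π,
            (f₀ y * Real.sin (x + 0 * Real.sin ((k₀ : ℝ) * y))
              + g₀ y * Real.cos (x + 0 * Real.sin ((k₀ : ℝ) * y))) ^ 2 := by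
        apply swap_int; fun_prop
    _ = ∫ y in (-π)..π, π * (f₀ y ^ 2 + g₀ y ^ 2) := by
        apply intervalIntegral.integral_congr
        intro y _
        dsimp only
        exact trig_int _ _ _

/-- For the shear `U(y) = sin(k₀ y)`, the `H¹` norm of the transported scalar grows at most
quadratically: `‖ρ(t)‖²_{H¹} ≤ 2‖ρ(0)‖²_{H¹} + 10π k₀² t² ‖ρ(0)‖²_{L²}`. -/
theorem h1_growth_upper_bound (k₀ : ℕ) (hk₀ : 1 ≤ k₀) (f₀ g₀ : ℝ → ℝ)
    (hf₀ : ContDiff ℝ 1 f₀) (hg₀ : ContDiff ℝ 1 g₀)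
    (hfper : ∀ y, f₀ (y + 2 * π) = f₀ y) (hgper : ∀ y, g₀ (y + 2 * π) = g₀ y) :
    ∀ t : ℝ, 0 ≤ t →
      h1NormSq (shearSol k₀ f₀ g₀ t) ≤
        2 * h1NormSq (shearSol k₀ f₀ g₀ 0) +
          10 * π * (k₀ : ℝ) ^ 2 * t ^ 2 * l2NormSq (shearSol k₀ f₀ g₀ 0) := by
  intro t ht
  have hfc : Continuous f₀ := hf₀.continuous
  have hgc : Continuous g₀ := hg₀.continuous
  have hfc' : Continuous (deriv f₀) := hf₀.continuous_deriv le_rfl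
  have hgc' : Continuous (deriv g₀) := hg₀.continuous_deriv le_rfl
  rw [h1_formula k₀ f₀ g₀ hf₀ hg₀ t, h1_formula k₀ f₀ g₀ hf₀ hg₀ 0,
    l2_formula k₀ f₀ g₀ hf₀ hg₀]
  rw [← intervalIntegral.integral_const_mul, ← intervalIntegral.integral_const_mul]
  have i1 : IntervalIntegrable (fun y =>
      2 * (2 * π * (f₀ y ^ 2 + g₀ y ^ 2)
        + π * ((deriv f₀ y - 0 * (k₀ : ℝ) * Real.cos ((k₀ : ℝ) * y) * g₀ y) ^ 2
          + (deriv g₀ y + 0 * (k₀ : ℝ) * Real.cos ((k₀ : ℝ) * y) * f₀ y) ^ 2)))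
      volume (-π) π := by
    apply Continuous.intervalIntegrable; fun_prop
  have i2 : IntervalIntegrable (fun y =>
      10 * π * (k₀ : ℝ) ^ 2 * t ^ 2 * (π * (f₀ y ^ 2 + g₀ y ^ 2))) volume (-π) π := by
    apply Continuous.intervalIntegrable; fun_prop
  rw [← intervalIntegral.integral_add i1 i2]
  have hle : (-π) ≤ π := by linarith [Real.pi_pos]
  have iL : IntervalIntegrable (fun y =>
      2 * π * (f₀ y ^ 2 + g₀ y ^ 2)
        + π * ((deriv f₀ y - t * (k₀ : ℝ) * Real.cos ((k₀ : ℝ) * y) * g₀ y) ^ 2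
          + (deriv g₀ y + t * (k₀ : ℝ) * Real.cos ((k₀ : ℝ) * y) * f₀ y) ^ 2))
      volume (-π) π := by
    apply Continuous.intervalIntegrable; fun_prop
  apply intervalIntegral.integral_mono_on hle iL (i1.add i2)
  intro y _
  have hA : (0:ℝ) ≤ f₀ y ^ 2 + g₀ y ^ 2 := by positivity
  have hc : Real.cos ((k₀ : ℝ) * y) ^ 2 ≤ 1 := Real.cos_sq_le_one _
  have h1 : (deriv f₀ y - t * (k₀ : ℝ) * Real.cos ((k₀ : ℝ) * y) * g₀ y) ^ 2
      + (deriv g₀ y + t * (k₀ : ℝ) * Real.cos ((k₀ : ℝ) * y) * f₀ y) ^ 2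
      ≤ 2 * (deriv f₀ y ^ 2 + deriv g₀ y ^ 2)
        + 2 * ((t * (k₀ : ℝ) * Real.cos ((k₀ : ℝ) * y)) ^ 2 * (f₀ y ^ 2 + g₀ y ^ 2)) := by
    nlinarith [sq_nonneg (deriv f₀ y + t * (k₀ : ℝ) * Real.cos ((k₀ : ℝ) * y) * g₀ y),
      sq_nonneg (deriv g₀ y - t * (k₀ : ℝ) * Real.cos ((k₀ : ℝ) * y) * f₀ y)]
  have h2 : (t * (k₀ : ℝ) * Real.cos ((k₀ : ℝ) * y)) ^ 2 ≤ t ^ 2 * (k₀ : ℝ) ^ 2 := by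
    nlinarith [sq_nonneg (t * (k₀ : ℝ)), hc]
  have h3 : (t * (k₀ : ℝ) * Real.cos ((k₀ : ℝ) * y)) ^ 2 * (f₀ y ^ 2 + g₀ y ^ 2)
      ≤ t ^ 2 * (k₀ : ℝ) ^ 2 * (f₀ y ^ 2 + g₀ y ^ 2) :=
    mul_le_mul_of_nonneg_right h2 hA
  have hX : (0:ℝ) ≤ t ^ 2 * (k₀ : ℝ) ^ 2 * (f₀ y ^ 2 + g₀ y ^ 2) := by positivity
  have h4 : 2 * π * (t ^ 2 * (k₀ : ℝ) ^ 2 * (f₀ y ^ 2 + g₀ y ^ 2))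
      ≤ 10 * π ^ 2 * (t ^ 2 * (k₀ : ℝ) ^ 2 * (f₀ y ^ 2 + g₀ y ^ 2)) := by
    have hπ : (2 : ℝ) * π ≤ 10 * π ^ 2 := by nlinarith [Real.pi_gt_three]
    exact mul_le_mul_of_nonneg_right hπ hX
  have h5 : π * ((deriv f₀ y - t * (k₀ : ℝ) * Real.cos ((k₀ : ℝ) * y) * g₀ y) ^ 2
      + (deriv g₀ y + t * (k₀ : ℝ) * Real.cos ((k₀ : ℝ) * y) * f₀ y) ^ 2)
      ≤ π * (2 * (deriv f₀ y ^ 2 + deriv g₀ y ^ 2)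
        + 2 * (t ^ 2 * (k₀ : ℝ) ^ 2 * (f₀ y ^ 2 + g₀ y ^ 2))) := by
    apply mul_le_mul_of_nonneg_left _ Real.pi_pos.le
    linarith [h1, h3]
  nlinarith [h5, h4, hA, Real.pi_pos]
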